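/- arXiv:0708.1859 — 3 statements merged into one kernel-verified Lean document; each statement's English description precedes it below -/
import Mathlib

section
/- Let p be a natural number and let c_0, c_1, ..., c_p be real numbers. Define the trigonometric polynomial c(ω) = Σ_{j=0}^{p} c_j e^{-i j ω} (a complex-valued function of ω ∈ ℝ). Then (1/(2π)) ∫_{-π/2}^{π/2} |c(ω)|² dω = (1/2) Σ_{i=0}^{p} Σ_{j=0}^{p} sinc((i-j)/2) · c_i · c_j. -/
open Real MeasureTheory Finset

/-- The normalized sinc function: `sinc x = sin (π x) / (π x)` for `x ≠ 0`, and `sinc 0 = 1`. -/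
noncomputable def sinc (x : ℝ) : ℝ := if x = 0 then 1 else Real.sin (Real.pi * x) / (Real.pi * x)

lemma integral_cos_mul_aux (k : ℝ) :
    ∫ ω in (-(Real.pi/2))..(Real.pi/2), Real.cos (k * ω) = Real.pi * _root_.sinc (k / 2) := by
  rcases eq_or_ne k 0 with hk | hk
  · simp [hk, _root_.sinc]
  · rw [intervalIntegral.integral_comp_mul_left (fun x => Real.cos x) hk]
    rw [integral_cos, _root_.sinc, if_neg (by simpa using hk), smul_eq_mul]
    have : Real.sin (k * -(Real.pi/2)) = - Real.sin (k * (Real.pi/2)) := by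
      rw [mul_neg, Real.sin_neg]
    rw [this, show Real.pi * (k/2) = k * (Real.pi/2) by ring]
    field_simp
    ring

lemma abs_sq_expand_aux (p : ℕ) (c : ℕ → ℝ) (ω : ℝ) :
    (‖∑ j ∈ Finset.range (p + 1),
        (c j : ℂ) * Complex.exp (-Complex.I * (j : ℂ) * (ω : ℂ))‖) ^ 2
    = ∑ i ∈ Finset.range (p + 1), ∑ j ∈ Finset.range (p + 1),
        c i * c j * Real.cos (((i : ℝ) - (j : ℝ)) * ω) := by
  set z : ℂ := ∑ j ∈ Finset.range (p + 1), (c j : ℂ) * Complex.exp (-Complex.I * (j : ℂ) * (ω : ℂ)) with hz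
  have h1 : (‖z‖) ^ 2 = (z * (starRingEnd ℂ) z).re := by
    rw [Complex.mul_conj]
    simp [Complex.sq_norm]
  rw [h1]
  have hconj : (starRingEnd ℂ) z = ∑ j ∈ Finset.range (p + 1),
      (c j : ℂ) * Complex.exp (Complex.I * (j : ℂ) * (ω : ℂ)) := by
    rw [hz, map_sum]
    refine Finset.sum_congr rfl fun j _ => ?_
    rw [map_mul, Complex.conj_ofReal, ← Complex.exp_conj]
    congr 1
    simp [map_mul, Complex.conj_I, Complex.conj_ofReal]
  rw [hconj, hz, Finset.sum_mul_sum, Complex.re_sum]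
  refine Finset.sum_congr rfl fun i _ => ?_
  rw [Complex.re_sum]
  refine Finset.sum_congr rfl fun j _ => ?_
  have : ((c i : ℂ) * Complex.exp (-Complex.I * (i : ℂ) * (ω : ℂ))) *
      ((c j : ℂ) * Complex.exp (Complex.I * (j : ℂ) * (ω : ℂ)))
      = ((c i * c j : ℝ) : ℂ) * Complex.exp ((((i : ℝ) - (j : ℝ)) * ω : ℝ) * (-Complex.I)) := by
    rw [mul_mul_mul_comm, ← Complex.exp_add]
    push_cast
    ring_nf
  rw [this]
  rw [Complex.re_ofReal_mul]
  congr 1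
  rw [show (((((i:ℝ) - j) * ω : ℝ)) : ℂ) * (-Complex.I) = (-((((i:ℝ)-j)*ω : ℝ)) : ℂ) * Complex.I by push_cast; ring]
  rw [← Complex.ofReal_neg, Complex.exp_ofReal_mul_I_re, Real.cos_neg]

/-- In-band noise power of the noise-shaping filter with real coefficients `c 0, …, c p`:
`(1/(2π)) ∫_{-π/2}..(π/2) |c(ω)|² dω = (1/2) ∑_i ∑_j sinc((i-j)/2) c_i c_j`. -/
theorem inband_power_eq_double_sum (p : ℕ) (c : ℕ → ℝ) :
    (1 / (2 * Real.pi)) *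
      ∫ ω in (-(Real.pi / 2))..(Real.pi / 2),
        (‖∑ j ∈ Finset.range (p + 1),
          (c j : ℂ) * Complex.exp (-Complex.I * (j : ℂ) * (ω : ℂ))‖) ^ 2
    = (1 / 2) * ∑ i ∈ Finset.range (p + 1), ∑ j ∈ Finset.range (p + 1),
        _root_.sinc (((i : ℝ) - (j : ℝ)) / 2) * c i * c j := by
  have hint : ∫ ω in (-(Real.pi / 2))..(Real.pi / 2),
        (‖∑ j ∈ Finset.range (p + 1),
          (c j : ℂ) * Complex.exp (-Complex.I * (j : ℂ) * (ω : ℂ))‖) ^ 2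
      = ∑ i ∈ Finset.range (p + 1), ∑ j ∈ Finset.range (p + 1),
          c i * c j * (Real.pi * _root_.sinc (((i : ℝ) - (j : ℝ)) / 2)) := by
    rw [intervalIntegral.integral_congr (g := fun ω => ∑ i ∈ Finset.range (p + 1),
        ∑ j ∈ Finset.range (p + 1), c i * c j * Real.cos (((i : ℝ) - (j : ℝ)) * ω))
        (fun ω _ => abs_sq_expand_aux p c ω)]
    rw [intervalIntegral.integral_finset_sum]
    · refine Finset.sum_congr rfl fun i _ => ?_
      rw [intervalIntegral.integral_finset_sum]
      · refine Finset.sum_congr rfl fun j _ => ?_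
        rw [intervalIntegral.integral_const_mul, integral_cos_mul_aux]
      · intro j _
        exact (Continuous.intervalIntegrable (by continuity) _ _)
    · intro i _
      exact (Continuous.intervalIntegrable (by continuity) _ _)
  rw [hint, Finset.mul_sum, Finset.mul_sum]
  refine Finset.sum_congr rfl fun i _ => ?_
  rw [Finset.mul_sum, Finset.mul_sum]
  refine Finset.sum_congr rfl fun j _ => ?_
  have hπ : Real.pi ≠ 0 := Real.pi_ne_zero
  field_simp
end

section
/- Let σ_X > 0, σ_E > 0 and δ ≥ 1. Define the rate R = (1/2) log₂( (σ_X² + σ_E²(δ + δ⁻¹)/2) / σ_E² ), the side distortion d_s = σ_X² σ_E² (δ + δ⁻¹) / (2σ_X² + σ_E²(δ + δ⁻¹)), the central distortion d_c = σ_X² σ_E² δ⁻¹ / (2σ_X² + σ_E² δ⁻¹), and set Π = (1 − d_s/σ_X²)² and Δ = d_s²/σ_X⁴ − 2^{-4R}. Then d_c = σ_X² · 2^{-4R} / (1 − (√Π − √Δ)²), i.e., the central distortion of the Delta-Sigma quantization scheme meets Ozarow's lower bound with equality. -/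
open Real

/-- Lemma 2 of the paper: the central distortion of the Delta-Sigma quantization scheme meets
Ozarow's lower bound with equality: `d_c = σ_X² 2^{-4R} / (1 − (√Π − √Δ)²)` where
`Π = (1 − d_s/σ_X²)²` and `Δ = d_s²/σ_X⁴ − 2^{-4R}`. -/
theorem delta_sigma_meets_ozarow (σX σE δ : ℝ) (hX : 0 < σX) (hE : 0 < σE) (hδ : 1 ≤ δ) :
    let R := (1 / 2) * Real.logb 2 ((σX ^ 2 + σE ^ 2 * (δ + δ⁻¹) / 2) / σE ^ 2)
    let ds := σX ^ 2 * σE ^ 2 * (δ + δ⁻¹) / (2 * σX ^ 2 + σE ^ 2 * (δ + δ⁻¹))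
    let dc := σX ^ 2 * σE ^ 2 * δ⁻¹ / (2 * σX ^ 2 + σE ^ 2 * δ⁻¹)
    let Pi' := (1 - ds / σX ^ 2) ^ 2
    let Δ := ds ^ 2 / σX ^ 4 - (2 : ℝ) ^ (-(4 * R))
    dc = σX ^ 2 * (2 : ℝ) ^ (-(4 * R)) / (1 - (Real.sqrt Pi' - Real.sqrt Δ) ^ 2) := by
  intro R ds dc Pi' Δ
  have hδ0 : (0:ℝ) < δ := lt_of_lt_of_le one_pos hδ
  have hδi : (0:ℝ) < δ⁻¹ := inv_pos.2 hδ0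
  have hδd : (0:ℝ) ≤ δ - δ⁻¹ := by
    have h1 : δ⁻¹ ≤ 1 := inv_le_one_of_one_le₀ hδ
    linarith
  have hX2 : (0:ℝ) < σX ^ 2 := by positivity
  have hE2 : (0:ℝ) < σE ^ 2 := by positivity
  have hRdef : R = (1 / 2) * Real.logb 2 ((σX ^ 2 + σE ^ 2 * (δ + δ⁻¹) / 2) / σE ^ 2) := rfl
  have hdsdef : ds = σX ^ 2 * σE ^ 2 * (δ + δ⁻¹) / (2 * σX ^ 2 + σE ^ 2 * (δ + δ⁻¹)) := rfl
  have hdcdef : dc = σX ^ 2 * σE ^ 2 * δ⁻¹ / (2 * σX ^ 2 + σE ^ 2 * δ⁻¹) := rfl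
  have hPidef : Pi' = (1 - ds / σX ^ 2) ^ 2 := rfl
  have hΔdef : Δ = ds ^ 2 / σX ^ 4 - (2 : ℝ) ^ (-(4 * R)) := rfl
  set M : ℝ := σX ^ 2 + σE ^ 2 * (δ + δ⁻¹) / 2 with hMdef
  have hM0 : (0:ℝ) < M := by rw [hMdef]; positivity
  have hD0 : (0:ℝ) < 2 * σX ^ 2 + σE ^ 2 * (δ + δ⁻¹) := by positivity
  have hlog : (2:ℝ) ^ Real.logb 2 (M / σE ^ 2) = M / σE ^ 2 :=
    Real.rpow_logb two_pos (by norm_num) (by positivity)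
  have hP : (2:ℝ) ^ (-(4 * R)) = σE ^ 4 / M ^ 2 := by
    have h1 : -(4 * R) = Real.logb 2 (M / σE ^ 2) * (-2) := by rw [hRdef]; ring
    rw [h1, Real.rpow_mul (by norm_num : (0:ℝ) ≤ 2), hlog,
      show ((-2):ℝ) = ((-2:ℤ):ℝ) by norm_num, Real.rpow_intCast]
    rw [zpow_neg, show ((2:ℤ)) = ((2:ℕ):ℤ) by norm_num, zpow_natCast]
    field_simp
  have hsqPi : Real.sqrt Pi' = σX ^ 2 / M := by
    have h1 : Pi' = (σX ^ 2 / M) ^ 2 := by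
      rw [hPidef, hdsdef, hMdef]
      field_simp
      ring
    rw [h1, Real.sqrt_sq (by positivity)]
  have hsqΔ : Real.sqrt Δ = σE ^ 2 * (δ - δ⁻¹) / (2 * M) := by
    have h1 : Δ = (σE ^ 2 * (δ - δ⁻¹) / (2 * M)) ^ 2 := by
      rw [hΔdef, hP, hdsdef, hMdef]
      field_simp
      ring
    rw [h1, Real.sqrt_sq (by positivity)]
  rw [hdcdef, hP, hsqPi, hsqΔ]
  have hden : 1 - (σX ^ 2 / M - σE ^ 2 * (δ - δ⁻¹) / (2 * M)) ^ 2
      = σE ^ 2 * δ * (2 * σX ^ 2 + σE ^ 2 * δ⁻¹) / M ^ 2 := by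
    rw [hMdef]
    field_simp
    ring
  rw [hden]
  have hd2 : (0:ℝ) < 2 * σX ^ 2 + σE ^ 2 * δ⁻¹ := by positivity
  field_simp
end

section
/- Let σ_X > 0, σ_E > 0 and δ > 0. Define the rate R = (1/2) log₂( (σ_X² + σ_E²(δ + δ⁻¹)/2) / σ_E² ) and the side distortion d_s = σ_X² σ_E² (δ + δ⁻¹) / (2σ_X² + σ_E²(δ + δ⁻¹)). Then d_s ≥ σ_X² · 2^{-2R}, with equality if and only if δ = 1. -/
open Real

/-- Ozarow's side-distortion bound is met by the Delta-Sigma quantization scheme: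
`d_s ≥ σ_X² 2^{-2R}`, with equality iff `δ = 1`. -/
theorem side_distortion_bound (σX σE δ : ℝ) (hX : 0 < σX) (hE : 0 < σE) (hδ : 0 < δ) :
    let R := (1 / 2) * Real.logb 2 ((σX ^ 2 + σE ^ 2 * (δ + δ⁻¹) / 2) / σE ^ 2)
    let ds := σX ^ 2 * σE ^ 2 * (δ + δ⁻¹) / (2 * σX ^ 2 + σE ^ 2 * (δ + δ⁻¹))
    ds ≥ σX ^ 2 * (2 : ℝ) ^ (-(2 * R)) ∧
      (ds = σX ^ 2 * (2 : ℝ) ^ (-(2 * R)) ↔ δ = 1) := by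
  intro R ds
  have hδi : 0 < δ⁻¹ := inv_pos.mpr hδ
  have hs : 0 < δ + δ⁻¹ := by linarith
  have hsum2 : 2 ≤ δ + δ⁻¹ := by
    have h := sq_nonneg (δ - 1)
    have : δ * δ⁻¹ = 1 := mul_inv_cancel₀ hδ.ne'
    nlinarith
  have hX2 : 0 < σX ^ 2 := by positivity
  have hE2 : 0 < σE ^ 2 := by positivity
  have hA : 0 < (σX ^ 2 + σE ^ 2 * (δ + δ⁻¹) / 2) / σE ^ 2 := by positivity
  have hD : 0 < 2 * σX ^ 2 + σE ^ 2 * (δ + δ⁻¹) := by positivity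
  have hpow : (2 : ℝ) ^ (-(2 * R)) =
      ((σX ^ 2 + σE ^ 2 * (δ + δ⁻¹) / 2) / σE ^ 2)⁻¹ := by
    have : -(2 * R) = Real.logb 2 ((σX ^ 2 + σE ^ 2 * (δ + δ⁻¹) / 2) / σE ^ 2)⁻¹ := by
      rw [Real.logb_inv]; simp only [R]; ring
    rw [this, Real.rpow_logb (by norm_num) (by norm_num) (by positivity)]
  have hrhs : σX ^ 2 * (2 : ℝ) ^ (-(2 * R)) =
      2 * σX ^ 2 * σE ^ 2 / (2 * σX ^ 2 + σE ^ 2 * (δ + δ⁻¹)) := by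
    rw [hpow]
    field_simp
  constructor
  · rw [hrhs]
    have : ds = σX ^ 2 * σE ^ 2 * (δ + δ⁻¹) / (2 * σX ^ 2 + σE ^ 2 * (δ + δ⁻¹)) := rfl
    rw [this, ge_iff_le, div_le_div_iff₀ hD hD]
    nlinarith [mul_nonneg (mul_nonneg (sub_nonneg.mpr hsum2) (mul_pos hX2 hE2).le) hD.le]
  · rw [hrhs]
    constructor
    · intro h
      have h2 : σX ^ 2 * σE ^ 2 * (δ + δ⁻¹) = 2 * σX ^ 2 * σE ^ 2 := by
        have h' := congrArg (· * (2 * σX ^ 2 + σE ^ 2 * (δ + δ⁻¹))) h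
        simpa [ds, div_mul_cancel₀, hD.ne'] using h'
      have hne : σX ^ 2 * σE ^ 2 ≠ 0 := by positivity
      have hsum : δ + δ⁻¹ = 2 := by
        have h3 : (σX ^ 2 * σE ^ 2) * (δ + δ⁻¹) = (σX ^ 2 * σE ^ 2) * 2 := by
          linear_combination h2
        exact mul_left_cancel₀ hne h3
      have hd : δ * δ⁻¹ = 1 := mul_inv_cancel₀ hδ.ne'
      have h3 : (δ - 1) ^ 2 = 0 := by linear_combination δ * hsum - hd
      have h4 : δ - 1 = 0 := by
        exact pow_eq_zero_iff (n := 2) (by norm_num) |>.mp h3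
      linarith
    · intro h
      subst h
      show σX ^ 2 * σE ^ 2 * (1 + 1⁻¹) / (2 * σX ^ 2 + σE ^ 2 * (1 + 1⁻¹)) = _
      norm_num
      ring_nf
end
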